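/- Quadtree surrogate comparison: let ε ∈ (0, 1], suppose ‖x* − c_v‖ ≥ 8ε^{-1}·2^ℓ·√d, ‖x* − c_u‖ ≤ 2^ℓ√d, ‖c_u − s_u‖ ≤ 2^ℓ√d, ‖c_v − s_v‖ ≤ 2^ℓ√d, and ‖y − x*‖ ≤ ε^{-1}·2^ℓ·√d. Then ‖y − s_u‖ ≤ (ε^{-1} + 2)·2^ℓ√d < ‖y − s_v‖. -/

import Mathlib

/-- Quadtree surrogate comparison: under the stated separation and approximation
hypotheses with ε ∈ (0,1], ‖y − s_u‖ ≤ (ε⁻¹ + 2)·2^ℓ√d < ‖y − s_v‖. -/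
theorem stmt16 {d : ℕ} (hd : 1 ≤ d) (y xstar cu cv su sv : EuclideanSpace ℝ (Fin d))
    (ℓ : ℤ) (ε : ℝ) (hε0 : 0 < ε) (hε : ε ≤ 1)
    (hsep : 8 * ε⁻¹ * (2 : ℝ) ^ ℓ * Real.sqrt d ≤ ‖xstar - cv‖)
    (hu : ‖xstar - cu‖ ≤ (2 : ℝ) ^ ℓ * Real.sqrt d)
    (hsu : ‖cu - su‖ ≤ (2 : ℝ) ^ ℓ * Real.sqrt d)
    (hsv : ‖cv - sv‖ ≤ (2 : ℝ) ^ ℓ * Real.sqrt d)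
    (hy : ‖y - xstar‖ ≤ ε⁻¹ * (2 : ℝ) ^ ℓ * Real.sqrt d) :
    ‖y - su‖ ≤ (ε⁻¹ + 2) * (2 : ℝ) ^ ℓ * Real.sqrt d ∧
    (ε⁻¹ + 2) * (2 : ℝ) ^ ℓ * Real.sqrt d < ‖y - sv‖ := by
  have hεinv : 1 ≤ ε⁻¹ := (one_le_inv₀ hε0).mpr hε
  have hp : (0 : ℝ) < (2 : ℝ) ^ ℓ := zpow_pos (by norm_num) ℓ
  have hs : (0 : ℝ) < Real.sqrt d := Real.sqrt_pos.mpr (by exact_mod_cast hd)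
  have hps : (0 : ℝ) < (2 : ℝ) ^ ℓ * Real.sqrt d := mul_pos hp hs
  constructor
  · have t1 : ‖y - su‖ ≤ ‖y - xstar‖ + ‖xstar - cu‖ + ‖cu - su‖ := by
      calc ‖y - su‖ ≤ ‖y - cu‖ + ‖cu - su‖ := norm_sub_le_norm_sub_add_norm_sub _ _ _
        _ ≤ (‖y - xstar‖ + ‖xstar - cu‖) + ‖cu - su‖ := by
            gcongr; exact norm_sub_le_norm_sub_add_norm_sub _ _ _
    calc ‖y - su‖ ≤ ε⁻¹ * (2:ℝ)^ℓ * Real.sqrt d + (2:ℝ)^ℓ * Real.sqrt d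
        + (2:ℝ)^ℓ * Real.sqrt d := by
          refine t1.trans ?_; gcongr
      _ = (ε⁻¹ + 2) * (2:ℝ)^ℓ * Real.sqrt d := by ring
  · have t2 : ‖xstar - cv‖ ≤ ‖y - xstar‖ + ‖y - sv‖ + ‖cv - sv‖ := by
      calc ‖xstar - cv‖ ≤ ‖xstar - sv‖ + ‖sv - cv‖ := norm_sub_le_norm_sub_add_norm_sub _ _ _
        _ ≤ (‖xstar - y‖ + ‖y - sv‖) + ‖sv - cv‖ := by
            gcongr; exact norm_sub_le_norm_sub_add_norm_sub _ _ _
        _ = ‖y - xstar‖ + ‖y - sv‖ + ‖cv - sv‖ := by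
            rw [norm_sub_rev xstar y, norm_sub_rev sv cv]
    have h1 : 8 * ε⁻¹ * (2:ℝ)^ℓ * Real.sqrt d ≤
        ε⁻¹ * (2:ℝ)^ℓ * Real.sqrt d + ‖y - sv‖ + (2:ℝ)^ℓ * Real.sqrt d := by
      refine hsep.trans (t2.trans ?_); gcongr
    nlinarith [mul_pos hp hs, hεinv]
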